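/- Let n ∈ ℕ with n ≥ 2, let H ⊆ ℝ with |H| ≥ n+1, let ω = (ω₁, …, ω_n) : H → ℝⁿ be an n-dimensional positive Chebyshev system over H such that ω_{⟨n−1⟩} is an (n−1)-dimensional positive Chebyshev system over H, and let f : H → ℝ. Then f is ω-convex if and only if for each (n−1)-tuple x₁ < … < x_{n−1} in H, the function x ↦ [x₁, …, x_{n−1}, x; f]_ω is nondecreasing on H ∖ {x₁, …, x_{n−1}}. -/

import Mathlib

/-- `Φ_ω(x₁,…,x_m) = det(ω_i(x_j))`. -/
noncomputable def Phi {m : ℕ} (ω : Fin m → ℝ → ℝ) (x : Fin m → ℝ) : ℝ :=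
  Matrix.det (Matrix.of fun i j => ω i (x j))

/-- `ω` is an `m`-dimensional positive Chebyshev system over `H`. -/
def IsPosChebyshev {m : ℕ} (ω : Fin m → ℝ → ℝ) (H : Set ℝ) : Prop :=
  ∀ x : Fin m → ℝ, (∀ i, x i ∈ H) → StrictMono x → 0 < Phi ω x

/-- `f` is convex with respect to the `m`-dimensional system `ω` on `S`. -/
def IsConvexWRT {m : ℕ} (ω : Fin m → ℝ → ℝ) (S : Set ℝ) (f : ℝ → ℝ) : Prop :=
  ∀ x : Fin (m + 1) → ℝ, (∀ i, x i ∈ S) → StrictMono x → 0 ≤ Phi (Fin.snoc ω f) x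

/-- The generalized divided difference `[x₁,…,x_k; f]_{ω⟨k⟩}`:
the numerator replaces the last function `ω_k` by `f`. -/
noncomputable def divDiff {k : ℕ} (ω : Fin k → ℝ → ℝ) (f : ℝ → ℝ) (x : Fin k → ℝ) : ℝ :=
  Phi (fun i => if (i : ℕ) + 1 = k then f else ω i) x / Phi ω x

namespace ChebAux

open Matrix Function


lemma divDiff_comp_perm {N : ℕ} (ω : Fin N → ℝ → ℝ) (f : ℝ → ℝ) (x : Fin N → ℝ)
    (σ : Equiv.Perm (Fin N)) :
    divDiff ω f (x ∘ σ) = divDiff ω f x := by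
  have key : ∀ g : Fin N → ℝ → ℝ, Phi g (x ∘ σ)
      = ((Equiv.Perm.sign σ : ℤ) : ℝ) * Phi g x := by
    intro g
    have h : (Matrix.of fun i c => g i ((x ∘ σ) c))
        = (Matrix.of fun i c => g i (x c)).submatrix id σ := rfl
    rw [Phi, Phi, h, Matrix.det_permute']
  rw [divDiff, divDiff, key, key]
  rcases Int.units_eq_one_or (Equiv.Perm.sign σ) with h | h <;> rw [h] <;> push_cast <;>
    simp [neg_div_neg_eq]

lemma exists_comp_perm {N : ℕ} {u u' : Fin N → ℝ} (hu : Function.Injective u)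
    (hu' : Function.Injective u') (h : Set.range u = Set.range u') :
    ∃ σ : Equiv.Perm (Fin N), u ∘ σ = u' := by
  refine ⟨(Equiv.ofInjective u' hu').trans
    ((Equiv.setCongr h.symm).trans (Equiv.ofInjective u hu).symm), ?_⟩
  funext i
  simp only [Function.comp_apply, Equiv.trans_apply]
  rw [Equiv.apply_ofInjective_symm hu]
  rfl

lemma range_comp_succAbove {N : ℕ} {z : Fin (N + 1) → ℝ} (hz : Function.Injective z)
    (t : Fin (N + 1)) :
    Set.range (z ∘ t.succAbove) = Set.range z \ {z t} := by
  rw [Set.range_comp, Fin.range_succAbove]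
  ext a
  simp only [Set.mem_image, Set.mem_compl_iff, Set.mem_singleton_iff, Set.mem_diff,
    Set.mem_range]
  constructor
  · rintro ⟨i, hi, rfl⟩
    exact ⟨⟨i, rfl⟩, fun h => hi (hz h)⟩
  · rintro ⟨⟨i, rfl⟩, hne⟩
    exact ⟨i, fun h => hne (congrArg z h), rfl⟩

lemma range_snoc {N : ℕ} (x : Fin N → ℝ) (y : ℝ) :
    Set.range (Fin.snoc x y : Fin (N + 1) → ℝ) = insert y (Set.range x) := by
  ext a
  simp only [Set.mem_range, Set.mem_insert_iff]
  constructor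
  · rintro ⟨i, rfl⟩
    induction i using Fin.lastCases with
    | last => left; rw [Fin.snoc_last]
    | cast i' => right; exact ⟨i', by rw [Fin.snoc_castSucc]⟩
  · rintro (rfl | ⟨i, rfl⟩)
    · exact ⟨Fin.last N, by rw [Fin.snoc_last]⟩
    · exact ⟨i.castSucc, by rw [Fin.snoc_castSucc]⟩

lemma snoc_injective {N : ℕ} {x : Fin N → ℝ} {y : ℝ} (hx : Function.Injective x)
    (hy : y ∉ Set.range x) :
    Function.Injective (Fin.snoc x y : Fin (N + 1) → ℝ) := by
  intro a b hab
  induction a using Fin.lastCases with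
  | last =>
    induction b using Fin.lastCases with
    | last => rfl
    | cast b' =>
      rw [Fin.snoc_last, Fin.snoc_castSucc] at hab
      exact absurd ⟨b', hab.symm⟩ hy
  | cast a' =>
    induction b using Fin.lastCases with
    | last =>
      rw [Fin.snoc_last, Fin.snoc_castSucc] at hab
      exact absurd ⟨a', hab⟩ hy
    | cast b' =>
      rw [Fin.snoc_castSucc, Fin.snoc_castSucc] at hab
      rw [hx hab]

lemma numRows_eq {m : ℕ} (ω : Fin (m + 2) → ℝ → ℝ) (f : ℝ → ℝ) :
    (fun i : Fin (m + 2) => if (i : ℕ) + 1 = m + 2 then f else ω i)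
      = Fin.snoc (fun i : Fin (m + 1) => ω i.castSucc) f := by
  funext i
  induction i using Fin.lastCases with
  | last => simp [Fin.snoc_last]
  | cast i' =>
    have h : (i'.castSucc : ℕ) + 1 ≠ m + 2 := by
      have := i'.isLt; simp only [Fin.coe_castSucc]; omega
    rw [Fin.snoc_castSucc, if_neg h]



/-- determinant as a linear map in the last row -/
noncomputable def rowDet {p : ℕ} (M : Matrix (Fin (p + 1)) (Fin (p + 1)) ℝ) :
    (Fin (p + 1) → ℝ) →ₗ[ℝ] ℝ where
  toFun v := (M.updateRow (Fin.last p) v).det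
  map_add' u v := Matrix.det_updateRow_add M _ u v
  map_smul' c v := Matrix.det_updateRow_smul M _ c v

lemma updateRow_snoc {p : ℕ} (W : Fin p → Fin (p + 1) → ℝ) (w v : Fin (p + 1) → ℝ) :
    (Matrix.of (Fin.snoc W w)).updateRow (Fin.last p) v = Matrix.of (Fin.snoc W v) := by
  ext i c
  rcases eq_or_ne i (Fin.last p) with rfl | h
  · simp [Matrix.updateRow_self, Fin.snoc_last]
  · obtain ⟨i', rfl⟩ := Fin.exists_castSucc_eq.mpr h
    simp [Matrix.updateRow_ne h, Fin.snoc_castSucc]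

lemma rowDet_snoc {p : ℕ} (W : Fin p → Fin (p + 1) → ℝ) (w v : Fin (p + 1) → ℝ) :
    rowDet (Matrix.of (Fin.snoc W w)) v = (Matrix.of (Fin.snoc W v)).det := by
  simp [rowDet, updateRow_snoc]

lemma det_snoc_single {p : ℕ} (W : Fin p → Fin (p + 1) → ℝ) (t : Fin (p + 1)) :
    (Matrix.of (Fin.snoc W (Pi.single t (1 : ℝ)))).det
      = (-1) ^ (p + t.1) * (Matrix.of fun i c => W i (t.succAbove c)).det := by
  rw [Matrix.det_succ_row _ (Fin.last p)]
  rw [Finset.sum_eq_single t]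
  · have h1 : (Matrix.of (Fin.snoc W (Pi.single t (1 : ℝ)))) (Fin.last p) t = 1 := by
      simp [Fin.snoc_last]
    have h2 : (Matrix.of (Fin.snoc W (Pi.single t (1 : ℝ)))).submatrix
        (Fin.last p).succAbove t.succAbove = Matrix.of fun i c => W i (t.succAbove c) := by
      ext i c
      simp [Matrix.submatrix_apply, Fin.succAbove_last, Fin.snoc_castSucc]
    rw [h1, h2]
    simp [Fin.val_last]
  · intro c _ hc
    have : (Matrix.of (Fin.snoc W (Pi.single t (1 : ℝ)))) (Fin.last p) c = 0 := by
      simp [Fin.snoc_last, Pi.single_eq_of_ne hc]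
    rw [this]; ring
  · intro h; exact absurd (Finset.mem_univ t) h

lemma det_snoc_dup {p : ℕ} (W : Fin p → Fin (p + 1) → ℝ) (i : Fin p) :
    (Matrix.of (Fin.snoc W (W i))).det = 0 := by
  apply Matrix.det_zero_of_row_eq (i := i.castSucc) (j := Fin.last p)
  · exact Fin.ne_of_lt (Fin.castSucc_lt_last i)
  · funext c; simp [Fin.snoc_castSucc, Fin.snoc_last]

theorem sylvester {q : ℕ} (W : Fin (q + 1) → Fin (q + 2) → ℝ) (v : Fin (q + 2) → ℝ)
    (j k : Fin (q + 2)) (J : Fin (q + 1)) (hJ : J.castSucc = j) (hjk : j < k)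
    (hDj : (Matrix.of fun i c => W i (j.succAbove c)).det ≠ 0) :
    (Matrix.of (Fin.snoc W v)).det *
        (Matrix.of fun (i : Fin q) (c : Fin q) =>
          W i.castSucc (k.succAbove (J.succAbove c))).det
      = (Matrix.of (Fin.snoc (fun (i : Fin q) (c : Fin (q + 1)) => W i.castSucc (j.succAbove c))
            (fun c => v (j.succAbove c)))).det * (Matrix.of fun i c => W i (k.succAbove c)).det
        - (Matrix.of (Fin.snoc (fun (i : Fin q) (c : Fin (q + 1)) => W i.castSucc (k.succAbove c))
            (fun c => v (k.succAbove c)))).det * (Matrix.of fun i c => W i (j.succAbove c)).det := by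
  classical
  set C : ℝ := (Matrix.of fun (i : Fin q) (c : Fin q) =>
    W i.castSucc (k.succAbove (J.succAbove c))).det with hC
  set Dj : ℝ := (Matrix.of fun i c => W i (j.succAbove c)).det with hDjdef
  set Dk : ℝ := (Matrix.of fun i c => W i (k.succAbove c)).det with hDkdef
  -- the linear functional
  set L : (Fin (q + 2) → ℝ) →ₗ[ℝ] ℝ :=
    C • rowDet (Matrix.of (Fin.snoc W (0 : Fin (q + 2) → ℝ)))
      - Dk • (rowDet (Matrix.of (Fin.snoc (fun (i : Fin q) (c : Fin (q + 1)) =>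
          W i.castSucc (j.succAbove c)) (0 : Fin (q + 1) → ℝ))) ∘ₗ
          LinearMap.funLeft ℝ ℝ j.succAbove)
      + Dj • (rowDet (Matrix.of (Fin.snoc (fun (i : Fin q) (c : Fin (q + 1)) =>
          W i.castSucc (k.succAbove c)) (0 : Fin (q + 1) → ℝ))) ∘ₗ
          LinearMap.funLeft ℝ ℝ k.succAbove) with hL
  have hLval : ∀ u : Fin (q + 2) → ℝ, L u
      = C * (Matrix.of (Fin.snoc W u)).det
        - Dk * (Matrix.of (Fin.snoc (fun (i : Fin q) (c : Fin (q + 1)) =>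
            W i.castSucc (j.succAbove c)) (fun c => u (j.succAbove c)))).det
        + Dj * (Matrix.of (Fin.snoc (fun (i : Fin q) (c : Fin (q + 1)) =>
            W i.castSucc (k.succAbove c)) (fun c => u (k.succAbove c)))).det := by
    intro u
    simp only [hL, LinearMap.add_apply, LinearMap.sub_apply, LinearMap.smul_apply,
      LinearMap.comp_apply, LinearMap.funLeft_apply, smul_eq_mul, rowDet_snoc]
    rfl
  -- the basis matrix
  set B : Matrix (Fin (q + 2)) (Fin (q + 2)) ℝ :=
    Matrix.of (Fin.snoc W (Pi.single j (1 : ℝ))) with hB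
  have hdetB : B.det = (-1) ^ (q + 1 + j.1) * Dj := det_snoc_single W j
  have hBunit : IsUnit B.det := by
    rw [hdetB]
    exact (isUnit_iff_ne_zero).2 (mul_ne_zero (pow_ne_zero _ (by norm_num)) hDj)
  -- L vanishes on the rows of B
  have hrows : ∀ t : Fin (q + 2), L (B t) = 0 := by
    intro t
    induction t using Fin.lastCases with
    | last =>
      have hBlast : B (Fin.last (q + 1)) = Pi.single j (1 : ℝ) := by
        funext c; simp [hB, Fin.snoc_last]
      rw [hBlast, hLval]
      -- first det: equals det B
      have e1 : (Matrix.of (Fin.snoc W (Pi.single j (1 : ℝ)))).det = (-1) ^ (q + 1 + j.1) * Dj :=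
        det_snoc_single W j
      -- second det: zero last row
      have e2 : (Matrix.of (Fin.snoc (fun (i : Fin q) (c : Fin (q + 1)) =>
          W i.castSucc (j.succAbove c))
          (fun c => (Pi.single j 1 : Fin (q + 2) → ℝ) (j.succAbove c)))).det = 0 := by
        apply Matrix.det_eq_zero_of_row_eq_zero (Fin.last q)
        intro c
        simp [Fin.snoc_last, Pi.single_apply, Fin.succAbove_ne j c]
      -- third det
      have hrow : (fun c => (Pi.single j 1 : Fin (q + 2) → ℝ) (k.succAbove c)) = Pi.single J (1 : ℝ) := by
        have hkJ : k.succAbove J = j := by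
          rw [Fin.succAbove_of_castSucc_lt k J (by rw [hJ]; exact hjk), hJ]
        funext c
        rcases eq_or_ne c J with h | hc
        · rw [h, hkJ]; simp
        · have h1 : k.succAbove c ≠ j := fun h =>
            hc (Fin.succAbove_right_injective (p := k) (h.trans hkJ.symm))
          rw [Pi.single_eq_of_ne h1, Pi.single_eq_of_ne hc]
      have e3 : (Matrix.of (Fin.snoc (fun (i : Fin q) (c : Fin (q + 1)) =>
          W i.castSucc (k.succAbove c))
          (fun c => (Pi.single j 1 : Fin (q + 2) → ℝ) (k.succAbove c)))).det = (-1) ^ (q + j.1) * C := by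
        rw [hrow]
        have := det_snoc_single (fun (i : Fin q) (c : Fin (q + 1)) =>
          W i.castSucc (k.succAbove c)) J
        rw [this, ← hJ]
        simp [hC, Fin.coe_castSucc]
      rw [e1, e2, e3]
      have : (-1 : ℝ) ^ (q + 1 + j.1) = -(-1 : ℝ) ^ (q + j.1) := by
        rw [show q + 1 + j.1 = (q + j.1) + 1 by ring, pow_succ]; ring
      rw [this]; ring
    | cast t' =>
      have hBt : B t'.castSucc = W t' := by funext c; simp [hB, Fin.snoc_castSucc]
      rw [hBt, hLval]
      induction t' using Fin.lastCases with
      | last =>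
        -- v = W (last q) : first det zero, others are Dj, Dk
        have e1 : (Matrix.of (Fin.snoc W (W (Fin.last q)))).det = 0 :=
          det_snoc_dup W (Fin.last q)
        have e2 : ∀ s : Fin (q + 2), (Matrix.of (Fin.snoc (fun (i : Fin q) (c : Fin (q + 1)) =>
            W i.castSucc (s.succAbove c))
            (fun c => W (Fin.last q) (s.succAbove c)))).det
            = (Matrix.of fun i c => W i (s.succAbove c)).det := by
          intro s
          congr 1
          ext i c
          induction i using Fin.lastCases with
          | last => simp [Fin.snoc_last]
          | cast i' => simp [Fin.snoc_castSucc]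
        rw [e1, e2 j, e2 k]
        ring
      | cast t'' =>
        have e1 : (Matrix.of (Fin.snoc W (W t''.castSucc))).det = 0 :=
          det_snoc_dup W t''.castSucc
        have e2 : ∀ s : Fin (q + 2), (Matrix.of (Fin.snoc (fun (i : Fin q) (c : Fin (q + 1)) =>
            W i.castSucc (s.succAbove c))
            (fun c => W t''.castSucc (s.succAbove c)))).det = 0 := by
          intro s
          apply Matrix.det_zero_of_row_eq (i := t''.castSucc) (j := Fin.last q)
          · exact Fin.ne_of_lt (Fin.castSucc_lt_last t'')
          · funext c; simp [Fin.snoc_castSucc, Fin.snoc_last]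
        rw [e1, e2 j, e2 k]
        ring
  -- every vector is a combination of rows of B
  have hLzero : L v = 0 := by
    have hv : v = ∑ i, (v ᵥ* B⁻¹) i • B i := by
      have h1 : (v ᵥ* B⁻¹) ᵥ* B = v := by
        rw [Matrix.vecMul_vecMul, Matrix.nonsing_inv_mul _ hBunit, Matrix.vecMul_one]
      conv_lhs => rw [← h1]
      funext c
      simp [Matrix.vecMul, dotProduct, Finset.sum_apply]
    rw [hv, map_sum]
    simp only [_root_.map_smul, smul_eq_mul]
    rw [Finset.sum_congr rfl fun i _ => by rw [hrows i]]
    simp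
  have := hLval v
  rw [hLzero] at this
  linarith


lemma key {m : ℕ} (ω : Fin (m + 2) → ℝ → ℝ) (f : ℝ → ℝ) (z : Fin (m + 3) → ℝ)
    (j k : Fin (m + 3)) (J : Fin (m + 2)) (hJ : J.castSucc = j) (hjk : j < k)
    (hDj : Phi ω (z ∘ j.succAbove) ≠ 0) :
    Phi (Fin.snoc ω f) z * Phi (fun i : Fin (m + 1) => ω i.castSucc)
        (z ∘ fun c => k.succAbove (J.succAbove c))
      = Phi (fun i : Fin (m + 2) => if (i : ℕ) + 1 = m + 2 then f else ω i) (z ∘ j.succAbove)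
          * Phi ω (z ∘ k.succAbove)
        - Phi (fun i : Fin (m + 2) => if (i : ℕ) + 1 = m + 2 then f else ω i) (z ∘ k.succAbove)
          * Phi ω (z ∘ j.succAbove) := by
  have H := sylvester (q := m + 1) (fun i t => ω i (z t)) (fun t => f (z t)) j k J hJ hjk hDj
  have eA : (Matrix.of (Fin.snoc (fun (i : Fin (m + 2)) (t : Fin (m + 3)) => ω i (z t))
      (fun t => f (z t)))).det = Phi (Fin.snoc ω f) z := by
    unfold Phi; congr 1; ext i t
    induction i using Fin.lastCases with
    | last => simp [Fin.snoc_last]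
    | cast i' => simp [Fin.snoc_castSucc]
  have eN : ∀ t : Fin (m + 3),
      (Matrix.of (Fin.snoc (fun (i : Fin (m + 1)) (c : Fin (m + 2)) =>
        ω i.castSucc (z (t.succAbove c))) (fun c => f (z (t.succAbove c))))).det
      = Phi (fun i : Fin (m + 2) => if (i : ℕ) + 1 = m + 2 then f else ω i)
          (z ∘ t.succAbove) := by
    intro t
    unfold Phi
    rw [numRows_eq]
    congr 1; ext i c
    induction i using Fin.lastCases with
    | last => simp [Fin.snoc_last]
    | cast i' => simp [Fin.snoc_castSucc]
  rw [← eA, ← eN j, ← eN k]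
  exact H

lemma divDiff_sub_nonneg {m : ℕ} {H : Set ℝ} (ω : Fin (m + 2) → ℝ → ℝ) (f : ℝ → ℝ)
    (hω : ∀ x : Fin (m + 2) → ℝ, (∀ i, x i ∈ H) → StrictMono x → 0 < Phi ω x)
    (hω' : ∀ x : Fin (m + 1) → ℝ, (∀ i, x i ∈ H) → StrictMono x →
      0 < Phi (fun i : Fin (m + 1) => ω i.castSucc) x)
    {z : Fin (m + 3) → ℝ} (hzH : ∀ i, z i ∈ H) (hz : StrictMono z) {j k : Fin (m + 3)}
    (hjk : j < k) :
    (0 ≤ Phi (Fin.snoc ω f) z) ↔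
      divDiff ω f (z ∘ k.succAbove) ≤ divDiff ω f (z ∘ j.succAbove) := by
  have hJlt : (j : ℕ) < m + 2 := lt_of_lt_of_le hjk (Nat.lt_succ_iff.mp k.isLt)
  set J : Fin (m + 2) := ⟨j, hJlt⟩ with hJdef
  have hJ : J.castSucc = j := Fin.ext rfl
  have hDpos : ∀ t : Fin (m + 3), 0 < Phi ω (z ∘ t.succAbove) := fun t =>
    hω _ (fun i => hzH _) (hz.comp (Fin.strictMono_succAbove t))
  have hCpos : 0 < Phi (fun i : Fin (m + 1) => ω i.castSucc)
      (z ∘ fun c => k.succAbove (J.succAbove c)) :=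
    hω' _ (fun i => hzH _)
      (hz.comp ((Fin.strictMono_succAbove k).comp (Fin.strictMono_succAbove J)))
  have hkey := key ω f z j k J hJ hjk (hDpos j).ne'
  rw [divDiff, divDiff, div_le_div_iff₀ (hDpos k) (hDpos j), ← sub_nonneg]
  constructor
  · intro h
    nlinarith [mul_nonneg h hCpos.le]
  · intro h
    nlinarith [hCpos]

end ChebAux

/-- Corollary 1 (Wąsowicz), (i) ⇔ (ii): `f` is `ω`-convex if and only if for each
`x₁ < … < x_{n-1}` in `H`, the function `x ↦ [x₁,…,x_{n-1},x; f]_ω` is nondecreasing on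
`H \ {x₁,…,x_{n-1}}`. -/
theorem omega_convex_iff_divided_difference_monotone (n : ℕ) (hn : 2 ≤ n) (H : Set ℝ)
    (hH : n + 1 ≤ H.ncard ∨ H.Infinite)
    (ω : Fin n → ℝ → ℝ) (f : ℝ → ℝ)
    (hω : IsPosChebyshev ω H)
    (hω' : IsPosChebyshev (fun i : Fin (n - 1) => ω (Fin.castLE (by omega) i)) H) :
    IsConvexWRT ω H f ↔
      ∀ x : Fin (n - 1) → ℝ, (∀ i, x i ∈ H) → StrictMono x →
        MonotoneOn
          (fun y : ℝ => divDiff ω f (Fin.snoc x y ∘ Fin.cast (by omega : n = n - 1 + 1)))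
          (H \ Set.range x) := by
  obtain ⟨m, rfl⟩ : ∃ m, n = m + 2 := ⟨n - 2, by omega⟩

  have hω'' : ∀ x : Fin (m + 1) → ℝ, (∀ i, x i ∈ H) → StrictMono x →
      0 < Phi (fun i : Fin (m + 1) => ω i.castSucc) x := hω'
  constructor
  · -- convex → monotone
    intro hconv x hxH hx
    intro y hy y' hy' hyy'
    show divDiff ω f (Fin.snoc x y) ≤ divDiff ω f (Fin.snoc x y')
    rcases eq_or_lt_of_le hyy' with rfl | hlt
    · exact le_refl _
    have hxinj : Function.Injective x := hx.injective
    have hy'nr : y' ∉ Set.range (Fin.snoc x y : Fin (m + 2) → ℝ) := by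
      rw [ChebAux.range_snoc]
      rintro (rfl | hmem)
      · exact absurd rfl hlt.ne'
      · exact hy'.2 hmem
    have hwinj : Function.Injective (Fin.snoc (Fin.snoc x y) y' : Fin (m + 3) → ℝ) :=
      ChebAux.snoc_injective (ChebAux.snoc_injective hxinj hy.2) hy'nr
    set w : Fin (m + 3) → ℝ := Fin.snoc (Fin.snoc x y) y' with hwdef
    have hwH : ∀ i, w i ∈ H := by
      intro i
      induction i using Fin.lastCases with
      | last => rw [hwdef]; rw [Fin.snoc_last]; exact hy'.1
      | cast i' =>
        rw [hwdef, Fin.snoc_castSucc]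
        induction i' using Fin.lastCases with
        | last => rw [Fin.snoc_last]; exact hy.1
        | cast i'' => rw [Fin.snoc_castSucc]; exact hxH i''
    set σ := Tuple.sort w with hσdef
    set z : Fin (m + 3) → ℝ := w ∘ σ with hzdef
    have hzmono : StrictMono z :=
      (Tuple.monotone_sort w).strictMono_of_injective (hwinj.comp σ.injective)
    have hzinj : Function.Injective z := hzmono.injective
    have hzH : ∀ i, z i ∈ H := fun i => hwH _
    have hzrange : Set.range z = Set.range w := by
      rw [hzdef, Set.range_comp, Equiv.range_eq_univ, Set.image_univ]
    have hwrange : Set.range w = insert y' (insert y (Set.range x)) := by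
      rw [hwdef, ChebAux.range_snoc, ChebAux.range_snoc]
    obtain ⟨j, hj⟩ : y ∈ Set.range z := by
      rw [hzrange, hwrange]; exact Set.mem_insert_of_mem _ (Set.mem_insert _ _)
    obtain ⟨k, hk⟩ : y' ∈ Set.range z := by
      rw [hzrange, hwrange]; exact Set.mem_insert _ _
    have hjk : j < k := hzmono.lt_iff_lt.mp (by rw [hj, hk]; exact hlt)
    -- identify the two n-tuples up to permutation
    have hr1 : Set.range (z ∘ k.succAbove) = Set.range (Fin.snoc x y : Fin (m + 2) → ℝ) := by
      rw [ChebAux.range_comp_succAbove hzinj k, hzrange, hwrange, hk, ChebAux.range_snoc,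
        Set.insert_diff_self_of_notMem]
      rw [Set.mem_insert_iff]
      rintro (rfl | hmem)
      · exact absurd rfl hlt.ne'
      · exact hy'.2 hmem
    have hr2 : Set.range (z ∘ j.succAbove) = Set.range (Fin.snoc x y' : Fin (m + 2) → ℝ) := by
      rw [ChebAux.range_comp_succAbove hzinj j, hzrange, hwrange, hj, ChebAux.range_snoc]
      rw [Set.insert_comm, Set.insert_diff_self_of_notMem]
      rw [Set.mem_insert_iff]
      rintro (rfl | hmem)
      · exact absurd rfl hlt.ne
      · exact hy.2 hmem
    obtain ⟨σ₁, hσ₁⟩ := ChebAux.exists_comp_perm (hzinj.comp (Fin.succAbove_right_injective))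
      (ChebAux.snoc_injective hxinj hy.2) hr1
    obtain ⟨σ₂, hσ₂⟩ := ChebAux.exists_comp_perm (hzinj.comp (Fin.succAbove_right_injective))
      (ChebAux.snoc_injective hxinj hy'.2) hr2
    have e1 : divDiff ω f (Fin.snoc x y) = divDiff ω f (z ∘ k.succAbove) := by
      rw [← hσ₁, ChebAux.divDiff_comp_perm]
    have e2 : divDiff ω f (Fin.snoc x y') = divDiff ω f (z ∘ j.succAbove) := by
      rw [← hσ₂, ChebAux.divDiff_comp_perm]
    rw [e1, e2]
    exact (ChebAux.divDiff_sub_nonneg ω f hω hω'' hzH hzmono hjk).mp (hconv z hzH hzmono)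
  · -- monotone → convex
    intro hmono u huH hu
    set x : Fin (m + 1) → ℝ := fun i => u i.castSucc.castSucc with hxdef
    have hxH : ∀ i, x i ∈ H := fun i => huH _
    have hxmono : StrictMono x :=
      hu.comp (Fin.strictMono_castSucc.comp Fin.strictMono_castSucc)
    set jj : Fin (m + 3) := ⟨m + 1, by omega⟩ with hjjdef
    have hjk : jj < Fin.last (m + 2) := by
      rw [Fin.lt_def]; simp [hjjdef]
    have h1 : (Fin.snoc x (u jj) : Fin (m + 2) → ℝ) = u ∘ (Fin.last (m + 2)).succAbove := by
      funext c
      induction c using Fin.lastCases with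
      | last =>
        rw [Fin.snoc_last]
        simp only [Function.comp_apply, Fin.succAbove_last_apply]
        exact congrArg u (Fin.ext rfl)
      | cast c' =>
        rw [Fin.snoc_castSucc]
        simp only [Function.comp_apply, Fin.succAbove_last_apply]
        rfl
    have h2 : (Fin.snoc x (u (Fin.last (m + 2))) : Fin (m + 2) → ℝ) = u ∘ jj.succAbove := by
      funext c
      induction c using Fin.lastCases with
      | last =>
        rw [Fin.snoc_last]
        simp only [Function.comp_apply]
        rw [Fin.succAbove_of_le_castSucc jj (Fin.last (m + 1)) (by rw [Fin.le_def]; simp [hjjdef])]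
        exact congrArg u (Fin.ext rfl)
      | cast c' =>
        rw [Fin.snoc_castSucc]
        simp only [Function.comp_apply]
        rw [Fin.succAbove_of_castSucc_lt jj c'.castSucc
          (by rw [Fin.lt_def]; simpa [hjjdef] using c'.isLt)]
    have hyH : u jj ∈ H \ Set.range x := by
      refine ⟨huH _, ?_⟩
      rintro ⟨i, hi⟩
      have := hu.injective hi
      have hv : (i.castSucc.castSucc : ℕ) = (jj : ℕ) := congrArg Fin.val this
      simp only [Fin.coe_castSucc, hjjdef] at hv
      omega
    have hy'H : u (Fin.last (m + 2)) ∈ H \ Set.range x := by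
      refine ⟨huH _, ?_⟩
      rintro ⟨i, hi⟩
      have := hu.injective hi
      have hv : (i.castSucc.castSucc : ℕ) = (Fin.last (m + 2) : ℕ) := congrArg Fin.val this
      simp only [Fin.coe_castSucc, Fin.val_last] at hv
      omega
    have hle : u jj ≤ u (Fin.last (m + 2)) := (hu hjk).le
    have hm := hmono x hxH hxmono hyH hy'H hle
    apply (ChebAux.divDiff_sub_nonneg ω f hω hω'' huH hu hjk).mpr
    rw [← h1, ← h2]
    exact hm
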